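/- Let X be a finite poset with n elements and let P ∈ Tot_X be any linear extension. Then in the ring of formal power series ℤ[[t]] the identity G_X(t) = Π_P(t) · ∏_{l=1}^{n} (1 − t^l)^{−1} holds, where G_X(t) = Σ_{p ∈ 𝒫_X} t^{v(p)} and Π_P(t) = Σ_{Q ∈ Tot_X} t^{v(q_{PQ})}. Equivalently, ∏_{l=1}^{n} (1 − t^l) · G_X(t) = Π_P(t). -/

import Mathlib

/-- A linear extension of a partially ordered set `X` with `n` elements:
an order-preserving bijection `X ≃ Fin n`. -/
def LinExt (X : Type*) [PartialOrder X] (n : ℕ) : Type _ :=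
  {P : X ≃ Fin n // ∀ a b : X, a ≤ b → P a ≤ P b}

/-- The pedestal `q_{PQ}` of `Q` with respect to `P`, as a function of the (0-based)
position `k`: the number of positions `j ≤ k` such that `Q⁻¹(j)` is a
`(P,Q)`-disagreement node. -/
def ped {X : Type*} [PartialOrder X] {n : ℕ} (P Q : LinExt X n) (k : Fin n) : ℕ :=
  (Finset.univ.filter (fun j : Fin n => j ≤ k ∧ 0 < j.1 ∧
    P.1 (Q.1.symm j) <
      P.1 (Q.1.symm ⟨j.1 - 1, Nat.lt_of_le_of_lt (Nat.sub_le _ _) j.2⟩))).card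

/-- The generating function `G_X(t) = Σ_{p ∈ 𝒫_X} t^{v(p)}` of the order-preserving
functions `p : X → ℤ_{≥0}`, counted by volume `v(p) = Σ_x p(x)`. -/
noncomputable def GX (X : Type*) [PartialOrder X] [Fintype X] : PowerSeries ℤ :=
  PowerSeries.mk fun k =>
    (Set.ncard {p : X → ℕ | (∀ a b : X, a ≤ b → p a ≤ p b) ∧ ∑ x : X, p x = k} : ℤ)

set_option linter.unusedSectionVars false

namespace PedestalAux

variable {X : Type*} [PartialOrder X] [Fintype X] {n : ℕ}

/-- Disagreement at position `j`. -/
def dis (P Q : LinExt X n) (j : Fin n) : Prop :=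
  0 < j.1 ∧ P.1 (Q.1.symm j) <
      P.1 (Q.1.symm ⟨j.1 - 1, Nat.lt_of_le_of_lt (Nat.sub_le _ _) j.2⟩)

instance (P Q : LinExt X n) : DecidablePred (dis P Q) :=
  fun _ => inferInstanceAs (Decidable (_ ∧ _))

lemma ped_eq (P Q : LinExt X n) (k : Fin n) :
    ped P Q k = (Finset.univ.filter fun j : Fin n => j ≤ k ∧ dis P Q j).card := rfl

lemma ped_mono (P Q : LinExt X n) : Monotone (ped P Q) := by
  intro a b hab
  rw [ped_eq, ped_eq]
  apply Finset.card_le_card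
  intro j hj
  simp only [Finset.mem_filter, Finset.mem_univ, true_and] at *
  exact ⟨hj.1.trans hab, hj.2⟩

lemma ped_bot (P Q : LinExt X n) (k : Fin n) (hk : k.1 = 0) : ped P Q k = 0 := by
  rw [ped_eq, Finset.card_eq_zero]
  ext j
  simp only [Finset.mem_filter, Finset.mem_univ, true_and, Finset.notMem_empty, iff_false]
  rintro ⟨h1, h2, -⟩
  rw [Fin.le_def, hk] at h1
  omega

lemma ped_succ (P Q : LinExt X n) (j k : Fin n) (hjk : j.1 + 1 = k.1) :
    ped P Q k = ped P Q j + if dis P Q k then 1 else 0 := by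
  rw [ped_eq, ped_eq]
  have hset : (Finset.univ.filter fun i : Fin n => i ≤ k ∧ dis P Q i)
      = (if dis P Q k then {k} else ∅) ∪
        (Finset.univ.filter fun i : Fin n => i ≤ j ∧ dis P Q i) := by
    ext i
    by_cases hd : dis P Q k <;>
      simp only [hd, if_true, if_false, Finset.mem_union, Finset.mem_singleton,
        Finset.notMem_empty, false_or, Finset.mem_filter, Finset.mem_univ, true_and,
        Fin.le_def] <;>
      constructor
    · rintro ⟨h1, h2⟩
      rcases Nat.lt_or_ge i.1 k.1 with h | h
      · exact Or.inr ⟨by omega, h2⟩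
      · exact Or.inl (Fin.ext (by omega))
    · rintro (rfl | ⟨h1, h2⟩)
      · exact ⟨le_rfl, hd⟩
      · exact ⟨by omega, h2⟩
    · rintro ⟨h1, h2⟩
      have : i.1 < k.1 := by
        rcases Nat.lt_or_ge i.1 k.1 with h | h
        · exact h
        · exact absurd h2 (by rw [show i = k from Fin.ext (by omega)]; exact hd)
      exact ⟨by omega, h2⟩
    · rintro ⟨h1, h2⟩
      exact ⟨by omega, h2⟩
  by_cases hd : dis P Q k
  · rw [hset, if_pos hd, ← Finset.insert_eq, Finset.card_insert_of_notMem, if_pos hd,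
      add_comm]
    simp only [Finset.mem_filter, Finset.mem_univ, true_and, Fin.le_def, not_and]
    intro h
    exact absurd h (by omega)
  · rw [hset, if_neg hd, Finset.empty_union, if_neg hd, add_zero]

end PedestalAux

namespace PedestalAux2
open PedestalAux

variable {X : Type*} [PartialOrder X] [Fintype X] {n : ℕ}

lemma nat_key_lt_of {a b r s : ℕ} (hr : r < n) (h : a < b) :
    n * a + r < n * b + s := by
  have h1 : n * (a + 1) ≤ n * b := Nat.mul_le_mul_left n h
  rw [Nat.mul_succ] at h1
  omega

lemma nat_key_lt {a b r s : ℕ} (hr : r < n) (hs : s < n) :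
    n * a + r < n * b + s ↔ a < b ∨ (a = b ∧ r < s) := by
  constructor
  · intro h
    rcases lt_trichotomy a b with h' | h' | h'
    · exact Or.inl h'
    · subst h'
      exact Or.inr ⟨rfl, by omega⟩
    · exact absurd (nat_key_lt_of (s := r) hs h') (by omega)
  · rintro (h | ⟨rfl, h⟩)
    · exact nat_key_lt_of (s := s) hr h
    · omega

lemma nat_key_eq {a b r s : ℕ} (hr : r < n) (hs : s < n)
    (h : n * a + r = n * b + s) : a = b ∧ r = s := by
  rcases lt_trichotomy a b with h' | h' | h'
  · exact absurd (nat_key_lt_of (s := s) hr h') (by omega)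
  · subst h'
    exact ⟨rfl, by omega⟩
  · exact absurd (nat_key_lt_of (s := r) hs h') (by omega)

/-- The sorting key: lexicographic in `(p x, P x)`, encoded as a natural number. -/
def keyf (P : LinExt X n) (p : X → ℕ) (x : X) : ℕ := n * p x + (P.1 x).1

lemma keyf_inj (P : LinExt X n) (p : X → ℕ) : Function.Injective (keyf P p) := by
  intro x y h
  have h2 := (nat_key_eq (P.1 x).2 (P.1 y).2 h).2
  exact P.1.injective (Fin.ext h2)

lemma keyf_lt_iff (P : LinExt X n) (p : X → ℕ) {x y : X} :
    keyf P p x < keyf P p y ↔ p x < p y ∨ (p x = p y ∧ P.1 x < P.1 y) := by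
  rw [keyf, keyf, nat_key_lt (P.1 x).2 (P.1 y).2, Fin.lt_def]

lemma keyf_lt_of_lt (P : LinExt X n) {p : X → ℕ} (hp : ∀ a b : X, a ≤ b → p a ≤ p b)
    {x y : X} (hxy : x < y) : keyf P p x < keyf P p y := by
  rw [keyf_lt_iff]
  rcases Nat.lt_or_ge (p x) (p y) with h | h
  · exact Or.inl h
  · have h1 : p x = p y := le_antisymm (hp x y hxy.le) h
    have h2 : P.1 x ≤ P.1 y := P.2 x y hxy.le
    have h3 : P.1 x ≠ P.1 y := fun hc => absurd (P.1.injective hc) hxy.ne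
    exact Or.inr ⟨h1, lt_of_le_of_ne h2 h3⟩

lemma strictMono_of_succ {α : Type*} [Preorder α] {f : Fin n → α}
    (h : ∀ j k : Fin n, j.1 + 1 = k.1 → f j < f k) : StrictMono f := by
  have key : ∀ (d : ℕ) (a b : Fin n), b.1 = a.1 + d + 1 → f a < f b := by
    intro d
    induction d with
    | zero => exact fun a b hab => h a b (by omega)
    | succ d ih =>
      intro a b hab
      have hb' : a.1 + d + 1 < n := by omega
      exact (ih a ⟨a.1 + d + 1, hb'⟩ rfl).trans (h ⟨a.1 + d + 1, hb'⟩ b (by simp; omega))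
  intro a b hab
  rw [Fin.lt_def] at hab
  exact key (b.1 - a.1 - 1) a b (by omega)

lemma monotone_of_succ {α : Type*} [Preorder α] {f : Fin n → α}
    (h : ∀ j k : Fin n, j.1 + 1 = k.1 → f j ≤ f k) : Monotone f := by
  have key : ∀ (d : ℕ) (a b : Fin n), b.1 = a.1 + d + 1 → f a ≤ f b := by
    intro d
    induction d with
    | zero => exact fun a b hab => h a b (by omega)
    | succ d ih =>
      intro a b hab
      have hb' : a.1 + d + 1 < n := by omega
      exact (ih a ⟨a.1 + d + 1, hb'⟩ rfl).trans (h ⟨a.1 + d + 1, hb'⟩ b (by simp; omega))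
  intro a b hab
  rw [Fin.le_def] at hab
  rcases Nat.eq_or_lt_of_le hab with he | hlt
  · rw [show a = b from Fin.ext he]
  · exact key (b.1 - a.1 - 1) a b (by omega)

end PedestalAux2

namespace PedestalAux3
open PedestalAux PedestalAux2

variable {X : Type*} [PartialOrder X] [Fintype X] {n : ℕ}

/-- The `P`-partition associated with a linear extension `Q` and a monotone sequence `c`. -/
def fwd (P Q : LinExt X n) (c : Fin n → ℕ) : X → ℕ :=
  fun x => c (Q.1 x) + ped P Q (Q.1 x)

lemma fwd_op (P Q : LinExt X n) {c : Fin n → ℕ} (hc : Monotone c) :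
    ∀ a b : X, a ≤ b → fwd P Q c a ≤ fwd P Q c b := fun a b hab =>
  add_le_add (hc (Q.2 a b hab)) (ped_mono P Q (Q.2 a b hab))

lemma fwd_sum (P Q : LinExt X n) (c : Fin n → ℕ) :
    ∑ x : X, fwd P Q c x = (∑ k : Fin n, ped P Q k) + ∑ k : Fin n, c k := by
  rw [Fintype.sum_bijective Q.1 Q.1.bijective (fun x => fwd P Q c x)
    (fun k => c k + ped P Q k) (fun x => rfl), Finset.sum_add_distrib, add_comm]

lemma fwd_at_pos (P Q : LinExt X n) (c : Fin n → ℕ) (k : Fin n) :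
    fwd P Q c (Q.1.symm k) = c k + ped P Q k := by
  simp [fwd]

lemma fwd_key_strict (P Q : LinExt X n) {c : Fin n → ℕ} (hc : Monotone c) :
    StrictMono (fun k => keyf P (fwd P Q c) (Q.1.symm k)) := by
  apply strictMono_of_succ
  intro j k hjk
  have hx := fwd_at_pos P Q c j
  have hy := fwd_at_pos P Q c k
  have hped := ped_succ P Q j k hjk
  have hcjk : c j ≤ c k := hc (by rw [Fin.le_def]; omega)
  rw [keyf_lt_iff]
  by_cases hd : dis P Q k
  · left
    rw [hx, hy, hped, if_pos hd]
    omega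
  · have hPlt : P.1 (Q.1.symm j) < P.1 (Q.1.symm k) := by
      have h0 : 0 < k.1 := by omega
      have hne : Q.1.symm j ≠ Q.1.symm k := by
        intro hc'
        have hjk' := Q.1.symm.injective hc'
        exact absurd (congrArg Fin.val hjk') (by omega)
      have hne' : P.1 (Q.1.symm j) ≠ P.1 (Q.1.symm k) :=
        fun hc' => hne (P.1.injective hc')
      have hjeq : (⟨k.1 - 1, Nat.lt_of_le_of_lt (Nat.sub_le _ _) k.2⟩ : Fin n) = j :=
        Fin.ext (by show k.1 - 1 = j.1; omega)
      have := hd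
      rw [dis, hjeq] at this
      push_neg at this
      exact lt_of_le_of_ne (this h0) hne'
    rw [hx, hy, hped, if_neg hd, add_zero]
    rcases Nat.lt_or_ge (c j + ped P Q j) (c k + ped P Q j) with h | h
    · exact Or.inl h
    · exact Or.inr ⟨by omega, hPlt⟩

end PedestalAux3

namespace PedestalAux4
open PedestalAux PedestalAux2 PedestalAux3

variable {X : Type*} [PartialOrder X] [Fintype X] {n : ℕ}

lemma sort_unique (P : LinExt X n) (p : X → ℕ) (Q Q' : LinExt X n)
    (hQ : StrictMono fun k => keyf P p (Q.1.symm k))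
    (hQ' : StrictMono fun k => keyf P p (Q'.1.symm k)) : Q = Q' := by
  have hrange : Set.range (fun k => keyf P p (Q.1.symm k))
      = Set.range (fun k => keyf P p (Q'.1.symm k)) := by
    have h1 := Q.1.symm.surjective.range_comp (keyf P p)
    have h2 := Q'.1.symm.surjective.range_comp (keyf P p)
    exact h1.trans h2.symm
  haveI : WellFoundedLT (Fin n) := inferInstance
  have hfun := (hQ.range_inj hQ').mp hrange
  have hsymm : ⇑Q.1.symm = ⇑Q'.1.symm :=
    funext fun k => keyf_inj P p (congrFun hfun k)
  apply Subtype.ext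
  apply Equiv.ext
  intro x
  apply Q'.1.symm.injective
  rw [Equiv.symm_apply_apply, ← hsymm, Equiv.symm_apply_apply]

lemma exists_sort (P : LinExt X n) (p : X → ℕ) (hp : ∀ a b : X, a ≤ b → p a ≤ p b) :
    ∃ Q : LinExt X n, StrictMono fun k => keyf P p (Q.1.symm k) := by
  classical
  have hcard : Fintype.card X = n := by
    rw [Fintype.card_congr P.1, Fintype.card_fin]
  have hscard : (Finset.univ.image (keyf P p)).card = n := by
    rw [Finset.card_image_of_injective _ (keyf_inj P p), Finset.card_univ, hcard]
  set φ := (Finset.univ.image (keyf P p)).orderIsoOfFin hscard with hφ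
  have hex : ∀ k : Fin n, ∃ x : X, keyf P p x = (φ k : ℕ) := by
    intro k
    have hm : (φ k : ℕ) ∈ Finset.univ.image (keyf P p) := (φ k).2
    obtain ⟨x, -, hx⟩ := Finset.mem_image.mp hm
    exact ⟨x, hx⟩
  choose g hg using hex
  have hginj : Function.Injective g := by
    intro a b hab
    have : (φ a : ℕ) = (φ b : ℕ) := by rw [← hg a, ← hg b, hab]
    exact φ.injective (Subtype.ext this)
  have hgsurj : Function.Surjective g := by
    intro x
    have hxs : keyf P p x ∈ Finset.univ.image (keyf P p) :=
      Finset.mem_image_of_mem _ (Finset.mem_univ x)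
    obtain ⟨k, hk⟩ := φ.surjective ⟨keyf P p x, hxs⟩
    refine ⟨k, keyf_inj P p ?_⟩
    rw [hg k, hk]
  have hgstrict : StrictMono fun k => keyf P p (g k) := by
    intro a b hab
    show keyf P p (g a) < keyf P p (g b)
    rw [hg a, hg b]
    exact φ.strictMono hab
  set e := Equiv.ofBijective g ⟨hginj, hgsurj⟩ with he
  have hOP : ∀ a b : X, a ≤ b → e.symm a ≤ e.symm b := by
    intro a b hab
    rcases eq_or_lt_of_le hab with rfl | hab'
    · exact le_rfl
    by_contra hcon
    push_neg at hcon
    have hk1 : g (e.symm a) = a := e.apply_symm_apply a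
    have hk2 : g (e.symm b) = b := e.apply_symm_apply b
    have h2 : keyf P p (g (e.symm b)) < keyf P p (g (e.symm a)) := hgstrict hcon
    rw [hk1, hk2] at h2
    exact absurd (keyf_lt_of_lt P hp hab') (by omega)
  refine ⟨⟨e.symm, hOP⟩, ?_⟩
  have hsymm : ∀ k, (e.symm.symm k) = g k := fun k => rfl
  intro a b hab
  show keyf P p (e.symm.symm a) < keyf P p (e.symm.symm b)
  rw [hsymm, hsymm]
  exact hgstrict hab

lemma sort_c (P Q : LinExt X n) (p : X → ℕ)
    (hQ : StrictMono fun k => keyf P p (Q.1.symm k)) :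
    ∃ c : Fin n → ℕ, Monotone c ∧ fwd P Q c = p := by
  have step : ∀ j k : Fin n, j.1 + 1 = k.1 →
      p (Q.1.symm j) ≤ p (Q.1.symm k) ∧
        (dis P Q k → p (Q.1.symm j) + 1 ≤ p (Q.1.symm k)) := by
    intro j k hjk
    have hkey : keyf P p (Q.1.symm j) < keyf P p (Q.1.symm k) :=
      hQ (show j < k by rw [Fin.lt_def]; omega)
    rw [keyf_lt_iff] at hkey
    constructor
    · rcases hkey with h | ⟨h, -⟩
      · omega
      · omega
    · intro hd
      rcases hkey with h | ⟨-, h⟩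
      · omega
      · exfalso
        have hjeq : (⟨k.1 - 1, Nat.lt_of_le_of_lt (Nat.sub_le _ _) k.2⟩ : Fin n) = j :=
          Fin.ext (by show k.1 - 1 = j.1; omega)
        rw [dis, hjeq] at hd
        exact absurd h (not_lt.mpr hd.2.le)
  have hle : ∀ (t : ℕ) (k : Fin n), k.1 = t → ped P Q k ≤ p (Q.1.symm k) := by
    intro t
    induction t with
    | zero =>
      intro k hk
      rw [ped_bot P Q k hk]
      exact Nat.zero_le _
    | succ t ih =>
      intro k hk
      have hj : t < n := by omega
      have hjk : (⟨t, hj⟩ : Fin n).1 + 1 = k.1 := by show t + 1 = k.1; omega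
      have h1 := ih ⟨t, hj⟩ rfl
      rw [ped_succ P Q ⟨t, hj⟩ k hjk]
      by_cases hd : dis P Q k
      · rw [if_pos hd]
        have := (step ⟨t, hj⟩ k hjk).2 hd
        omega
      · rw [if_neg hd, add_zero]
        have := (step ⟨t, hj⟩ k hjk).1
        omega
  refine ⟨fun k => p (Q.1.symm k) - ped P Q k, ?_, ?_⟩
  · apply monotone_of_succ
    intro j k hjk
    have h1 := hle j.1 j rfl
    have h2 := hle k.1 k rfl
    have h3 := ped_succ P Q j k hjk
    by_cases hd : dis P Q k
    · rw [if_pos hd] at h3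
      have := (step j k hjk).2 hd
      show p (Q.1.symm j) - ped P Q j ≤ p (Q.1.symm k) - ped P Q k
      omega
    · rw [if_neg hd, add_zero] at h3
      have := (step j k hjk).1
      show p (Q.1.symm j) - ped P Q j ≤ p (Q.1.symm k) - ped P Q k
      omega
  · funext x
    show p (Q.1.symm (Q.1 x)) - ped P Q (Q.1 x) + ped P Q (Q.1 x) = p x
    have h1 := hle (Q.1 x).1 (Q.1 x) rfl
    rw [Equiv.symm_apply_apply] at h1 ⊢
    omega

end PedestalAux4

namespace PedestalAux5
open PedestalAux PedestalAux2 PedestalAux3 PedestalAux4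

variable {X : Type*} [PartialOrder X] [Fintype X] {n : ℕ}

lemma finite_subtype_sum_le {α : Type*} [Fintype α] (Pr : (α → ℕ) → Prop) (m : ℕ)
    (h : ∀ f, Pr f → ∑ x : α, f x ≤ m) : Finite {f : α → ℕ // Pr f} := by
  have hbound : ∀ (f : {f : α → ℕ // Pr f}) (a : α), f.1 a < m + 1 := by
    intro f a
    have h1 := Finset.single_le_sum (f := f.1) (fun i _ => Nat.zero_le _) (Finset.mem_univ a)
    have h2 := h f.1 f.2
    omega
  apply Finite.of_injective
    (fun f : {f : α → ℕ // Pr f} => fun a => (⟨f.1 a, hbound f a⟩ : Fin (m + 1)))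
  intro f g hfg
  apply Subtype.ext
  funext a
  exact congrArg Fin.val (congrFun hfg a)

lemma fwd_inj (P Q Q' : LinExt X n) {c c' : Fin n → ℕ}
    (hc : Monotone c) (hc' : Monotone c') (h : fwd P Q c = fwd P Q' c') :
    Q = Q' ∧ c = c' := by
  have hQ := fwd_key_strict P Q hc
  have hQ' := fwd_key_strict P Q' hc'
  rw [h] at hQ
  have hQQ : Q = Q' := sort_unique P (fwd P Q' c') Q Q' hQ hQ'
  subst hQQ
  refine ⟨rfl, ?_⟩
  funext k
  have h2 := congrFun h (Q.1.symm k)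
  rw [fwd_at_pos, fwd_at_pos] at h2
  omega

lemma card_eq (P : LinExt X n) [Fintype (LinExt X n)] (m : ℕ) :
    Nat.card {p : X → ℕ // (∀ a b : X, a ≤ b → p a ≤ p b) ∧ ∑ x : X, p x = m}
      = ∑ Q : LinExt X n, Nat.card {c : Fin n → ℕ //
          Monotone c ∧ (∑ k : Fin n, ped P Q k) + ∑ k : Fin n, c k = m} := by
  haveI hA : Finite {p : X → ℕ // (∀ a b : X, a ≤ b → p a ≤ p b) ∧ ∑ x : X, p x = m} :=
    finite_subtype_sum_le _ m (fun f hf => hf.2.le)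
  haveI hC : ∀ Q : LinExt X n, Finite {c : Fin n → ℕ //
      Monotone c ∧ (∑ k : Fin n, ped P Q k) + ∑ k : Fin n, c k = m} :=
    fun Q => finite_subtype_sum_le _ m (fun f hf => by omega)
  set F : (Σ Q : LinExt X n, {c : Fin n → ℕ //
        Monotone c ∧ (∑ k : Fin n, ped P Q k) + ∑ k : Fin n, c k = m}) →
      {p : X → ℕ // (∀ a b : X, a ≤ b → p a ≤ p b) ∧ ∑ x : X, p x = m} :=
    fun z => ⟨fwd P z.1 z.2.1, fwd_op P z.1 z.2.2.1,
      by rw [fwd_sum]; exact z.2.2.2⟩ with hFdef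
  have hFbij : Function.Bijective F := by
    constructor
    · rintro ⟨Q, c, hc1, hc2⟩ ⟨Q', c', hc1', hc2'⟩ heq
      have hfwd : fwd P Q c = fwd P Q' c' := congrArg Subtype.val heq
      obtain ⟨hQ, hcc⟩ := fwd_inj P Q Q' hc1 hc1' hfwd
      subst hQ
      subst hcc
      rfl
    · rintro ⟨p, hp1, hp2⟩
      obtain ⟨Q, hQs⟩ := exists_sort P p hp1
      obtain ⟨c, hcmono, hceq⟩ := sort_c P Q p hQs
      have hsum : (∑ k : Fin n, ped P Q k) + ∑ k : Fin n, c k = m := by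
        rw [← fwd_sum P Q c, hceq, hp2]
      exact ⟨⟨Q, ⟨c, hcmono, hsum⟩⟩, Subtype.ext hceq⟩
  rw [← Nat.card_congr (Equiv.ofBijective F hFbij)]
  haveI : ∀ Q : LinExt X n, Fintype {c : Fin n → ℕ //
      Monotone c ∧ (∑ k : Fin n, ped P Q k) + ∑ k : Fin n, c k = m} :=
    fun Q => Fintype.ofFinite _
  rw [Nat.card_eq_fintype_card, Fintype.card_sigma]
  simp [Nat.card_eq_fintype_card]

end PedestalAux5

namespace PedestalAux6
open PedestalAux PedestalAux2 PedestalAux3 PedestalAux4 PedestalAux5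

/-- Number of monotone sequences of length `n` with given sum. -/
noncomputable def cardN (n m : ℕ) : ℕ := Nat.card {c : Fin n → ℕ // Monotone c ∧ ∑ k : Fin n, c k = m}

/-- The generating function of monotone `n`-sequences by sum,
equal to `∏_{l=1}^n (1-t^l)⁻¹`. -/
noncomputable def Hn (n : ℕ) : PowerSeries ℤ :=
  PowerSeries.mk fun m => (cardN n m : ℤ)

instance cardN_finite (n m : ℕ) : Finite {c : Fin n → ℕ // Monotone c ∧ ∑ k : Fin n, c k = m} :=
  finite_subtype_sum_le _ m (fun f hf => hf.2.le)

lemma cardN_zero (m : ℕ) : cardN 0 m = if m = 0 then 1 else 0 := by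
  rw [cardN]
  split_ifs with h
  · subst h
    rw [Nat.card_eq_one_iff_unique]
    constructor
    · constructor
      intro a b
      apply Subtype.ext
      funext k
      exact absurd k.2 (by omega)
    · exact ⟨⟨fun k => 0, monotone_const, by simp⟩⟩
  · rw [Nat.card_eq_zero]
    left
    constructor
    rintro ⟨c, -, hc⟩
    simp at hc
    omega

lemma cardN_succ (n m : ℕ) :
    cardN (n + 1) m = cardN n m + if n + 1 ≤ m then cardN (n + 1) (m - (n + 1)) else 0 := by
  classical
  have e0 : {c : {c : Fin (n+1) → ℕ // Monotone c ∧ ∑ k, c k = m} // c.1 0 = 0}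
      ≃ {c : Fin n → ℕ // Monotone c ∧ ∑ k, c k = m} := by
    have h1 : ∀ (c : {c : {c : Fin (n+1) → ℕ // Monotone c ∧ ∑ k, c k = m} // c.1 0 = 0}),
        Monotone (fun i : Fin n => c.1.1 i.succ) := by
      intro c a b hab
      exact c.1.2.1 (by rw [Fin.le_def]; simpa using hab)
    have h2 : ∀ (c : {c : {c : Fin (n+1) → ℕ // Monotone c ∧ ∑ k, c k = m} // c.1 0 = 0}),
        ∑ i : Fin n, c.1.1 i.succ = m := by
      intro c
      have h := c.1.2.2
      rw [Fin.sum_univ_succ, c.2] at h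
      simpa using h
    have h3 : ∀ (c : {c : Fin n → ℕ // Monotone c ∧ ∑ k, c k = m}),
        Monotone (Fin.cons 0 c.1 : Fin (n+1) → ℕ) := by
      intro c
      apply monotone_of_succ
      intro j k hjk
      have hk0 : k ≠ 0 := by
        intro hk
        rw [hk] at hjk
        simp at hjk
      rw [← Fin.succ_pred k hk0, Fin.cons_succ]
      by_cases hj0 : j = 0
      · rw [hj0, Fin.cons_zero]
        exact Nat.zero_le _
      · rw [← Fin.succ_pred j hj0, Fin.cons_succ]
        apply c.2.1
        rw [Fin.le_def]
        simp only [Fin.coe_pred]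
        omega
    have h4 : ∀ (c : {c : Fin n → ℕ // Monotone c ∧ ∑ k, c k = m}),
        ∑ k : Fin (n+1), (Fin.cons 0 c.1 : Fin (n+1) → ℕ) k = m := by
      intro c
      rw [Fin.sum_univ_succ, Fin.cons_zero]
      simpa using c.2.2
    have h5 : ∀ (c : {c : Fin n → ℕ // Monotone c ∧ ∑ k, c k = m}),
        (⟨Fin.cons 0 c.1, h3 c, h4 c⟩ :
          {c : Fin (n+1) → ℕ // Monotone c ∧ ∑ k, c k = m}).1 0 = 0 := by
      intro c
      show (Fin.cons 0 c.1 : Fin (n+1) → ℕ) 0 = 0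
      exact Fin.cons_zero _ _
    refine ⟨fun c => ⟨fun i => c.1.1 i.succ, h1 c, h2 c⟩,
      fun c => ⟨⟨Fin.cons 0 c.1, h3 c, h4 c⟩, h5 c⟩, ?_, ?_⟩
    · rintro ⟨⟨c, hc1, hc2⟩, hc0⟩
      apply Subtype.ext
      apply Subtype.ext
      funext i
      show (Fin.cons 0 (fun i => c i.succ) : Fin (n+1) → ℕ) i = c i
      rcases Fin.eq_zero_or_eq_succ i with rfl | ⟨i', rfl⟩
      · rw [Fin.cons_zero]
        exact (show c 0 = 0 from hc0).symm
      · rw [Fin.cons_succ]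
    · rintro ⟨c, hc1, hc2⟩
      apply Subtype.ext
      funext i
      show (Fin.cons 0 c : Fin (n+1) → ℕ) i.succ = c i
      exact Fin.cons_succ _ _ _
  have hpos : ∀ (c : {c : Fin (n+1) → ℕ // Monotone c ∧ ∑ k, c k = m}),
      ¬c.1 0 = 0 → ∀ i, 1 ≤ c.1 i := by
    intro c hc0 i
    have := c.2.1 (Fin.zero_le i)
    omega
  have hcard1 : Nat.card {c : {c : Fin (n+1) → ℕ // Monotone c ∧ ∑ k, c k = m} // ¬c.1 0 = 0}
      = if n + 1 ≤ m then cardN (n + 1) (m - (n + 1)) else 0 := by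
    split_ifs with hm
    · have e1 : {c : {c : Fin (n+1) → ℕ // Monotone c ∧ ∑ k, c k = m} // ¬c.1 0 = 0}
          ≃ {c : Fin (n+1) → ℕ // Monotone c ∧ ∑ k, c k = m - (n+1)} := by
        have hsub : ∀ (c : Fin (n+1) → ℕ), (∀ i, 1 ≤ c i) →
            (∑ i : Fin (n+1), (c i - 1)) + (n+1) = ∑ i : Fin (n+1), c i := by
          intro c h
          have h2 : ∑ i : Fin (n+1), c i = ∑ i : Fin (n+1), ((c i - 1) + 1) :=
            Finset.sum_congr rfl (fun i _ => by have := h i; omega)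
          rw [h2, Finset.sum_add_distrib]
          simp
        have h1 : ∀ (c : {c : {c : Fin (n+1) → ℕ // Monotone c ∧ ∑ k, c k = m} // ¬c.1 0 = 0}),
            Monotone (fun i => c.1.1 i - 1) := by
          intro c a b hab
          have ha := c.1.2.1 hab
          have hb := hpos c.1 c.2 a
          simp only
          omega
        have h2 : ∀ (c : {c : {c : Fin (n+1) → ℕ // Monotone c ∧ ∑ k, c k = m} // ¬c.1 0 = 0}),
            ∑ i : Fin (n+1), (c.1.1 i - 1) = m - (n+1) := by
          intro c
          have ha := hsub c.1.1 (hpos c.1 c.2)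
          have hb := c.1.2.2
          omega
        have h3 : ∀ (c : {c : Fin (n+1) → ℕ // Monotone c ∧ ∑ k, c k = m - (n+1)}),
            Monotone (fun i => c.1 i + 1) := by
          intro c a b hab
          have := c.2.1 hab
          simp only
          omega
        have h4 : ∀ (c : {c : Fin (n+1) → ℕ // Monotone c ∧ ∑ k, c k = m - (n+1)}),
            ∑ i : Fin (n+1), (c.1 i + 1) = m := by
          intro c
          rw [Finset.sum_add_distrib, c.2.2]
          simp
          omega
        have h5 : ∀ (c : {c : Fin (n+1) → ℕ // Monotone c ∧ ∑ k, c k = m - (n+1)}),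
            ¬(⟨fun i => c.1 i + 1, h3 c, h4 c⟩ :
              {c : Fin (n+1) → ℕ // Monotone c ∧ ∑ k, c k = m}).1 0 = 0 := by
          intro c
          simp
        refine ⟨fun c => ⟨fun i => c.1.1 i - 1, h1 c, h2 c⟩,
          fun c => ⟨⟨fun i => c.1 i + 1, h3 c, h4 c⟩, h5 c⟩, ?_, ?_⟩
        · rintro ⟨⟨c, hc1, hc2⟩, hc0⟩
          apply Subtype.ext
          apply Subtype.ext
          funext i
          have h6 : 1 ≤ c i := hpos ⟨c, hc1, hc2⟩ hc0 i
          show c i - 1 + 1 = c i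
          omega
        · rintro ⟨c, hc1, hc2⟩
          apply Subtype.ext
          funext i
          show c i + 1 - 1 = c i
          omega
      rw [Nat.card_congr e1, cardN]
    · rw [Nat.card_eq_zero]
      left
      constructor
      rintro ⟨⟨c, hc1, hc2⟩, hc0⟩
      have hp : ∀ i, 1 ≤ c i := hpos ⟨c, hc1, hc2⟩ hc0
      have : (n + 1) ≤ ∑ k : Fin (n+1), c k := by
        calc (n+1) = ∑ _k : Fin (n+1), 1 := by simp
          _ ≤ ∑ k : Fin (n+1), c k := Finset.sum_le_sum (fun i _ => hp i)
      omega
  have hsplit := Nat.card_congr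
    (Equiv.sumCompl (fun c : {c : Fin (n+1) → ℕ // Monotone c ∧ ∑ k, c k = m} => c.1 0 = 0))
  rw [Nat.card_sum] at hsplit
  simp only [cardN]
  rw [← hsplit, Nat.card_congr e0, hcard1]
  simp only [cardN]



lemma Hn_zero : Hn 0 = 1 := by
  apply PowerSeries.ext
  intro m
  rw [Hn, PowerSeries.coeff_mk, cardN_zero, PowerSeries.coeff_one]
  split_ifs <;> simp

lemma Hn_succ (n : ℕ) :
    (1 - (PowerSeries.X : PowerSeries ℤ) ^ (n + 1)) * Hn (n + 1) = Hn n := by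
  apply PowerSeries.ext
  intro m
  rw [sub_mul, one_mul, map_sub, mul_comm, PowerSeries.coeff_mul_X_pow']
  simp only [Hn, PowerSeries.coeff_mk]
  rw [show cardN n m = cardN (n+1) m - (if n + 1 ≤ m then cardN (n+1) (m - (n+1)) else 0) by
    rw [cardN_succ n m]; omega]
  have hle : (if n + 1 ≤ m then cardN (n+1) (m - (n+1)) else 0) ≤ cardN (n+1) m := by
    rw [cardN_succ n m]; omega
  split_ifs with h
  · rw [if_pos h] at hle
    push_cast [hle]
    ring
  · simp

lemma Hn_prod (n : ℕ) :
    (∏ l ∈ Finset.range n, (1 - (PowerSeries.X : PowerSeries ℤ) ^ (l + 1))) * Hn n = 1 := by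
  induction n with
  | zero => simp [Hn_zero]
  | succ n ih =>
    rw [Finset.prod_range_succ, mul_assoc, Hn_succ, ih]

end PedestalAux6

open PedestalAux PedestalAux2 PedestalAux3 PedestalAux4 PedestalAux5 PedestalAux6 in
/-- The identity `G_X(t) = Π_P(t) · Π_{l=1}^n (1-t^l)^{-1}` in `ℤ[[t]]`, in the
equivalent form `Π_{l=1}^n (1-t^l) · G_X(t) = Π_P(t)`, where
`Π_P(t) = Σ_{Q ∈ Tot_X} t^{v(q_{PQ})}`; in particular, it holds for every choice of the
linear extension `P`. -/
theorem pedestal_generating_function_identity (X : Type*) [PartialOrder X] [Fintype X]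
    (n : ℕ) (hn : Fintype.card X = n) [Fintype (LinExt X n)] (P : LinExt X n) :
    (∏ l ∈ Finset.range n, (1 - (PowerSeries.X : PowerSeries ℤ) ^ (l + 1))) * GX X =
      ∑ Q : LinExt X n, (PowerSeries.X : PowerSeries ℤ) ^ (∑ k : Fin n, ped P Q k) := by
  classical
  have hGX : GX X = (∑ Q : LinExt X n,
      (PowerSeries.X : PowerSeries ℤ) ^ (∑ k : Fin n, ped P Q k)) * Hn n := by
    apply PowerSeries.ext
    intro m
    rw [GX, PowerSeries.coeff_mk, Finset.sum_mul, map_sum]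
    have hterm : ∀ Q : LinExt X n,
        (PowerSeries.coeff m) ((PowerSeries.X : PowerSeries ℤ) ^ (∑ k : Fin n, ped P Q k)
            * Hn n)
          = if (∑ k : Fin n, ped P Q k) ≤ m
            then (cardN n (m - ∑ k : Fin n, ped P Q k) : ℤ) else 0 := by
      intro Q
      rw [mul_comm, PowerSeries.coeff_mul_X_pow']
      split_ifs with h
      · rw [Hn, PowerSeries.coeff_mk]
      · rfl
    rw [Finset.sum_congr rfl (fun Q _ => hterm Q)]
    have hQcard : ∀ Q : LinExt X n,
        Nat.card {c : Fin n → ℕ //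
            Monotone c ∧ (∑ k : Fin n, ped P Q k) + ∑ k : Fin n, c k = m}
          = if (∑ k : Fin n, ped P Q k) ≤ m
            then cardN n (m - ∑ k : Fin n, ped P Q k) else 0 := by
      intro Q
      split_ifs with h
      · rw [cardN]
        apply Nat.card_congr
        apply Equiv.subtypeEquivRight
        intro c
        constructor
        · rintro ⟨h1, h2⟩
          exact ⟨h1, by omega⟩
        · rintro ⟨h1, h2⟩
          exact ⟨h1, by omega⟩
      · rw [Nat.card_eq_zero]
        left
        constructor
        rintro ⟨c, -, hc⟩
        omega
    have hcount : Set.ncard {p : X → ℕ | (∀ a b : X, a ≤ b → p a ≤ p b) ∧ ∑ x : X, p x = m}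
        = ∑ Q : LinExt X n,
            if (∑ k : Fin n, ped P Q k) ≤ m
            then cardN n (m - ∑ k : Fin n, ped P Q k) else 0 := by
      rw [← Nat.card_coe_set_eq]
      rw [show Nat.card {p : X → ℕ | (∀ a b : X, a ≤ b → p a ≤ p b) ∧ ∑ x : X, p x = m}
          = Nat.card {p : X → ℕ // (∀ a b : X, a ≤ b → p a ≤ p b) ∧ ∑ x : X, p x = m}
        from rfl]
      rw [card_eq P m]
      exact Finset.sum_congr rfl (fun Q _ => hQcard Q)
    rw [hcount]
    push_cast
    apply Finset.sum_congr rfl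
    intro Q _
    split_ifs <;> simp
  rw [hGX]
  calc (∏ l ∈ Finset.range n, (1 - (PowerSeries.X : PowerSeries ℤ) ^ (l + 1)))
        * ((∑ Q : LinExt X n,
            (PowerSeries.X : PowerSeries ℤ) ^ (∑ k : Fin n, ped P Q k)) * Hn n)
      = (∑ Q : LinExt X n,
            (PowerSeries.X : PowerSeries ℤ) ^ (∑ k : Fin n, ped P Q k))
        * ((∏ l ∈ Finset.range n, (1 - (PowerSeries.X : PowerSeries ℤ) ^ (l + 1))) * Hn n) := by
        ring
    _ = _ := by rw [Hn_prod, mul_one]
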